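/- Kirchberg's ε-test: Let ω be a free ultrafilter on ℕ, let X₁, X₂, … be nonempty sets, and for each k ∈ ℕ let (fₙ^{(k)})ₙ be functions fₙ^{(k)} : Xₙ → [0, ∞). Define f_ω^{(k)} : ∏ₙ Xₙ → [0, ∞] by f_ω^{(k)}(s₁, s₂, …) = lim_{n→ω} fₙ^{(k)}(sₙ). Suppose for every m ∈ ℕ and ε > 0 there exists s ∈ ∏ₙ Xₙ with f_ω^{(k)}(s) < ε for all 1 ≤ k ≤ m. Then there exists t ∈ ∏ₙ Xₙ with f_ω^{(k)}(t) = 0 for all k ∈ ℕ. -/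

import Mathlib

open Filter

/-- Kirchberg's ε-test: if every finite family of the limit functions
`f_ω^{(k)}` can simultaneously be made smaller than any `ε > 0`, then some
point makes all of them vanish. -/
theorem kirchberg_epsilon_test
    (ω : Ultrafilter ℕ) (hω : (ω : Filter ℕ) ≤ Filter.cofinite)
    (X : ℕ → Type*) (hX : ∀ n, Nonempty (X n))
    (f : (k : ℕ) → (n : ℕ) → X n → ℝ) (hf : ∀ k n x, 0 ≤ f k n x)
    (h : ∀ m : ℕ, ∀ ε : ℝ, 0 < ε →
      ∃ s : ∀ n, X n, ∀ k ≤ m,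
        Filter.limsup (fun n => ENNReal.ofReal (f k n (s n))) (ω : Filter ℕ)
          < ENNReal.ofReal ε) :
    ∃ t : ∀ n, X n, ∀ k : ℕ,
      Filter.limsup (fun n => ENNReal.ofReal (f k n (t n))) (ω : Filter ℕ)
        = 0 := by
  classical
  have hpos : ∀ m : ℕ, (0:ℝ) < 1/(m+1) := fun m => by positivity
  choose s hs using fun m => h m (1/(m+1)) (hpos m)
  set A : ℕ → Set ℕ := fun m =>
    {n | ∀ k ≤ m, ENNReal.ofReal (f k n (s m n)) < ENNReal.ofReal (1/(m+1))}
    with hA_def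
  have hA : ∀ m, A m ∈ (ω : Filter ℕ) := by
    intro m
    have hev : ∀ᶠ n in (ω : Filter ℕ), ∀ k ∈ Finset.range (m+1),
        ENNReal.ofReal (f k n (s m n)) < ENNReal.ofReal (1/(m+1)) := by
      rw [Filter.eventually_all_finset]
      intro k hk
      exact Filter.eventually_lt_of_limsup_lt
        (hs m k (Nat.lt_succ_iff.mp (Finset.mem_range.mp hk)))
    filter_upwards [hev] with n hn k hk
    exact hn k (Finset.mem_range.mpr (Nat.lt_succ_of_le hk))
  set g : ℕ → ℕ := fun n => Nat.findGreatest (fun m => n ∈ A m) n with hg_def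
  refine ⟨fun n => s (g n) n, fun k => ?_⟩
  refine le_antisymm ?_ zero_le
  refine ENNReal.le_of_forall_pos_le_add fun ε hε _ => ?_
  rw [zero_add]
  have hεR : (0:ℝ) < (ε:ℝ) := hε
  obtain ⟨N, hN⟩ := exists_nat_gt (1/(ε:ℝ))
  set M := max k N with hM
  have hkM : k ≤ M := le_max_left _ _
  have hNM : (N:ℝ) ≤ M := Nat.cast_le.mpr (le_max_right _ _)
  have hεM : 1/((M:ℝ)+1) < ε := by
    rw [div_lt_iff₀ (by positivity)]
    have h1 : 1/(ε:ℝ) < M+1 := lt_of_lt_of_le hN (by linarith)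
    calc (1:ℝ) = ε * (1/ε) := by field_simp
      _ < ε * (M+1) := by exact mul_lt_mul_of_pos_left h1 hεR
      _ = ε * (↑M+1) := rfl
  have hge : {n | M ≤ n} ∈ (ω : Filter ℕ) := by
    apply hω
    rw [Nat.cofinite_eq_atTop]
    exact Filter.eventually_ge_atTop M
  have hev : ∀ᶠ n in (ω : Filter ℕ),
      ENNReal.ofReal (f k n (s (g n) n)) ≤ (ε : ENNReal) := by
    filter_upwards [hA M, hge] with n hn1 hn2
    have hMg : M ≤ g n := Nat.le_findGreatest hn2 hn1
    have hgspec : n ∈ A (g n) := Nat.findGreatest_spec (P := fun m => n ∈ A m) hn2 hn1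
    have h1 : ENNReal.ofReal (f k n (s (g n) n))
        < ENNReal.ofReal (1/((g n : ℝ)+1)) := hgspec k (le_trans hkM hMg)
    have h2 : (1:ℝ)/((g n : ℝ)+1) ≤ 1/((M:ℝ)+1) := by
      apply one_div_le_one_div_of_le (by positivity)
      have : (M:ℝ) ≤ (g n : ℝ) := Nat.cast_le.mpr hMg
      linarith
    have h3 : ENNReal.ofReal (1/((g n : ℝ)+1)) ≤ ENNReal.ofReal ((ε:ℝ)) :=
      ENNReal.ofReal_le_ofReal (le_of_lt (lt_of_le_of_lt h2 hεM))
    calc ENNReal.ofReal (f k n (s (g n) n))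
        ≤ ENNReal.ofReal ((ε:ℝ)) := le_of_lt (lt_of_lt_of_le h1 h3)
      _ = (ε : ENNReal) := ENNReal.ofReal_coe_nnreal
  exact Filter.limsup_le_of_le (by isBoundedDefault) hev
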